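/- For m a positive half-integer, s a half-integer, a a positive integer, and τ in the upper half-plane, z₁, z₂ complex with e^{2πiz₁}q^j ≠ 1 for all integers j (where q = e^{2πiτ}), one has Φ₁^{[m,s]}(τ,z₁,z₂,0) − Φ₁^{[m,s+a]}(τ,z₁,z₂,0) = Σ_{k=0}^{a−1} e^{πi(s+k)(z₁−z₂)} q^{−(s+k)²/(4m)} θ_{s+k,m}(τ, z₁+z₂). -/

import Mathlib

open Real Complex Filter Topology

noncomputable section

noncomputable def Phi1 (m s : ℝ) (τ z1 z2 t : ℂ) : ℂ :=
  Complex.exp (-2*(π:ℂ)*Complex.I*(m:ℂ)*t) *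
    ∑' j : ℤ,
      Complex.exp (2*(π:ℂ)*Complex.I*((m:ℂ)*(j:ℂ)*(z1+z2) + (s:ℂ)*z1)) *
        Complex.exp (2*(π:ℂ)*Complex.I*τ*((m:ℂ)*(j:ℂ)^2 + (s:ℂ)*(j:ℂ))) /
        (1 - Complex.exp (2*(π:ℂ)*Complex.I*z1) * Complex.exp (2*(π:ℂ)*Complex.I*τ) ^ j)

noncomputable def Phi2 (m s : ℝ) (τ z1 z2 t : ℂ) : ℂ :=
  Complex.exp (-2*(π:ℂ)*Complex.I*(m:ℂ)*t) *
    ∑' j : ℤ,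
      Complex.exp (-(2*(π:ℂ)*Complex.I)*((m:ℂ)*(j:ℂ)*(z1+z2) + (s:ℂ)*z2)) *
        Complex.exp (2*(π:ℂ)*Complex.I*τ*((m:ℂ)*(j:ℂ)^2 + (s:ℂ)*(j:ℂ))) /
        (1 - Complex.exp (-(2*(π:ℂ)*Complex.I)*z2) * Complex.exp (2*(π:ℂ)*Complex.I*τ) ^ j)

noncomputable def Phi (m s : ℝ) (τ z1 z2 t : ℂ) : ℂ :=
  Phi1 m s τ z1 z2 t - Phi2 m s τ z1 z2 t

noncomputable def jacobiThetaKM (k m : ℝ) (τ z : ℂ) : ℂ :=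
  ∑' j : ℤ,
    Complex.exp (2*(π:ℂ)*Complex.I*(m:ℂ)*((j:ℂ) + (k:ℂ)/(2*(m:ℂ)))*z) *
      Complex.exp (2*(π:ℂ)*Complex.I*τ*(m:ℂ)*((j:ℂ) + (k:ℂ)/(2*(m:ℂ)))^2)

/-- the generic term of the Phi1 series (numerator). -/
noncomputable def Fterm (m s : ℝ) (τ z1 z2 : ℂ) (j : ℤ) : ℂ :=
  Complex.exp (2*(π:ℂ)*Complex.I*((m:ℂ)*(j:ℂ)*(z1+z2) + (s:ℂ)*z1)) *
    Complex.exp (2*(π:ℂ)*Complex.I*τ*((m:ℂ)*(j:ℂ)^2 + (s:ℂ)*(j:ℂ)))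

lemma Fterm_eq (m s : ℝ) (τ z1 z2 : ℂ) (j : ℤ) :
    Fterm m s τ z1 z2 j = Complex.exp (2*(π:ℂ)*Complex.I*(s:ℂ)*z1) *
      jacobiTheta₂_term j ((m:ℂ)*(z1+z2) + (s:ℂ)*τ) (2*(m:ℂ)*τ) := by
  rw [Fterm, jacobiTheta₂_term, ← Complex.exp_add, ← Complex.exp_add]
  congr 1
  ring

lemma summable_Fterm (m s : ℝ) (hm : 0 < m) (τ z1 z2 : ℂ) (hτ : 0 < τ.im) :
    Summable (Fterm m s τ z1 z2) := by
  have h : (0:ℝ) < (2*(m:ℂ)*τ).im := by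
    simp only [Complex.mul_im, Complex.mul_re, Complex.ofReal_re, Complex.ofReal_im]
    norm_num
    positivity
  simpa only [← Fterm_eq] using
    (((summable_jacobiTheta₂_term_iff ((m:ℂ)*(z1+z2) + (s:ℂ)*τ) (2*(m:ℂ)*τ)).mpr
      h).mul_left (Complex.exp (2*(π:ℂ)*Complex.I*(s:ℂ)*z1)))

lemma Fterm_mul_q (m s : ℝ) (τ z1 z2 : ℂ) (j : ℤ) :
    Fterm m s τ z1 z2 j * (Complex.exp (2*(π:ℂ)*Complex.I*τ))^(-j) =
      Complex.exp (2*(π:ℂ)*Complex.I*(s:ℂ)*z1) *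
        jacobiTheta₂_term j ((m:ℂ)*(z1+z2) + (s:ℂ)*τ - τ) (2*(m:ℂ)*τ) := by
  rw [← Complex.exp_int_mul _ (-j), Fterm, jacobiTheta₂_term, ← Complex.exp_add,
    ← Complex.exp_add, ← Complex.exp_add]
  congr 1
  push_cast
  ring

lemma summable_FtermQ (m s : ℝ) (hm : 0 < m) (τ z1 z2 : ℂ) (hτ : 0 < τ.im) :
    Summable (fun j : ℤ => Fterm m s τ z1 z2 j * (Complex.exp (2*(π:ℂ)*Complex.I*τ))^(-j)) := by
  have h : (0:ℝ) < (2*(m:ℂ)*τ).im := by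
    simp only [Complex.mul_im, Complex.mul_re, Complex.ofReal_re, Complex.ofReal_im]
    norm_num
    positivity
  simpa only [← Fterm_mul_q] using
    (((summable_jacobiTheta₂_term_iff ((m:ℂ)*(z1+z2) + (s:ℂ)*τ - τ) (2*(m:ℂ)*τ)).mpr
      h).mul_left (Complex.exp (2*(π:ℂ)*Complex.I*(s:ℂ)*z1)))

lemma norm_q_lt_one (τ : ℂ) (hτ : 0 < τ.im) : ‖Complex.exp (2*(π:ℂ)*Complex.I*τ)‖ < 1 := by
  rw [Complex.norm_exp]
  have : (2*(π:ℂ)*Complex.I*τ).re = -(2*π*τ.im) := by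
    simp [Complex.mul_re, Complex.mul_im]
  rw [this, Real.exp_lt_one_iff]
  have := Real.pi_pos
  nlinarith

/-- Summability of the Phi1 series. -/
lemma summable_phi (m s : ℝ) (hm : 0 < m) (τ z1 z2 : ℂ) (hτ : 0 < τ.im)
    (hden : ∀ j : ℤ, Complex.exp (2*(π:ℂ)*Complex.I*z1) * Complex.exp (2*(π:ℂ)*Complex.I*τ) ^ j ≠ 1) :
    Summable (fun j : ℤ => Fterm m s τ z1 z2 j /
      (1 - Complex.exp (2*(π:ℂ)*Complex.I*z1) * Complex.exp (2*(π:ℂ)*Complex.I*τ) ^ j)) := by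
  set w := Complex.exp (2*(π:ℂ)*Complex.I*z1) with hw
  set q := Complex.exp (2*(π:ℂ)*Complex.I*τ) with hq
  have hw0 : (0:ℝ) < ‖w‖ := norm_pos_iff.mpr (Complex.exp_ne_zero _)
  have hq0 : (0:ℝ) < ‖q‖ := norm_pos_iff.mpr (Complex.exp_ne_zero _)
  have hq1 : ‖q‖ < 1 := norm_q_lt_one τ hτ
  set g : ℤ → ℝ := fun j => 2 * ‖Fterm m s τ z1 z2 j‖ +
      (2/‖w‖) * ‖Fterm m s τ z1 z2 j * q ^ (-j)‖ with hg
  have hsg : Summable g := by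
    exact ((summable_Fterm m s hm τ z1 z2 hτ).norm.mul_left 2).add
      (((summable_FtermQ m s hm τ z1 z2 hτ).norm.mul_left (2/‖w‖)))
  refine Summable.of_norm_bounded_eventually hsg ?_
  rw [Int.cofinite_eq, eventually_sup]
  constructor
  · -- atBot : ‖w * q^j‖ ≥ 2
    obtain ⟨n, hn⟩ := exists_pow_lt_of_lt_one (by positivity : (0:ℝ) < ‖w‖/2) hq1
    filter_upwards [eventually_le_atBot (-(n:ℤ))] with j hj
    have hqj : ‖q‖ ^ (-j) ≤ ‖q‖ ^ (n:ℤ) := by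
      apply zpow_le_zpow_right_of_le_one₀ hq0 hq1.le
      omega
    have h2 : ‖w‖ * ‖q‖ ^ j ≥ 2 := by
      have h3 : ‖q‖ ^ (-j) ≤ ‖w‖/2 := by
        calc ‖q‖ ^ (-j) ≤ ‖q‖ ^ (n:ℤ) := hqj
        _ = ‖q‖ ^ n := by norm_cast
        _ ≤ ‖w‖/2 := hn.le
      have h4 : ‖q‖ ^ j = (‖q‖ ^ (-j))⁻¹ := by rw [← zpow_neg, neg_neg]
      rw [h4, ge_iff_le, le_mul_inv_iff₀ (by positivity)]
      linarith
    have hD : ‖w‖ * ‖q‖ ^ j / 2 ≤ ‖1 - w * q ^ j‖ := by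
      have : ‖w * q ^ j‖ - ‖(1:ℂ)‖ ≤ ‖1 - w * q ^ j‖ := by
        rw [norm_sub_rev]; exact norm_sub_norm_le _ _
      rw [norm_mul, norm_zpow, norm_one] at this
      linarith
    rw [norm_div]
    have hd0 : (0:ℝ) < ‖w‖ * ‖q‖ ^ j / 2 := by positivity
    calc ‖Fterm m s τ z1 z2 j‖ / ‖1 - w * q ^ j‖
        ≤ ‖Fterm m s τ z1 z2 j‖ / (‖w‖ * ‖q‖ ^ j / 2) := by
          apply div_le_div_of_nonneg_left (norm_nonneg _) hd0 hD
      _ = (2/‖w‖) * ‖Fterm m s τ z1 z2 j * q ^ (-j)‖ := by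
          have hQ : ‖q‖ ^ j ≠ 0 := (zpow_pos hq0 j).ne'
          rw [norm_mul, norm_zpow, zpow_neg]
          rw [div_div_eq_mul_div, div_mul_eq_mul_div]
          field_simp [hw0.ne']
      _ ≤ g j := by
          have : (0:ℝ) ≤ 2 * ‖Fterm m s τ z1 z2 j‖ := by positivity
          simp only [hg]; linarith
  · -- atTop : ‖w * q^j‖ ≤ 1/2
    obtain ⟨n, hn⟩ := exists_pow_lt_of_lt_one
      (by positivity : (0:ℝ) < 1/(2*‖w‖)) hq1
    filter_upwards [eventually_ge_atTop (n:ℤ)] with j hj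
    have hqj : ‖q‖ ^ j ≤ ‖q‖ ^ (n:ℤ) := zpow_le_zpow_right_of_le_one₀ hq0 hq1.le hj
    have h2 : ‖w‖ * ‖q‖ ^ j ≤ 1/2 := by
      have : ‖q‖ ^ (n:ℤ) ≤ 1/(2*‖w‖) := by
        rw [show ((‖q‖:ℝ) ^ (n:ℤ) = ‖q‖ ^ n) by norm_cast]; exact hn.le
      have h5 : ‖q‖ ^ j ≤ 1/(2*‖w‖) := le_trans hqj this
      calc ‖w‖ * ‖q‖ ^ j ≤ ‖w‖ * (1/(2*‖w‖)) := by
            exact mul_le_mul_of_nonneg_left h5 (norm_nonneg _)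
        _ = 1/2 := by
            rw [mul_one_div, div_eq_div_iff (by positivity) (by norm_num)]
            ring
    have hD : (1:ℝ)/2 ≤ ‖1 - w * q ^ j‖ := by
      have : ‖(1:ℂ)‖ - ‖w * q ^ j‖ ≤ ‖1 - w * q ^ j‖ := norm_sub_norm_le _ _
      rw [norm_mul, norm_zpow, norm_one] at this
      linarith
    rw [norm_div]
    calc ‖Fterm m s τ z1 z2 j‖ / ‖1 - w * q ^ j‖
        ≤ ‖Fterm m s τ z1 z2 j‖ / (1/2) := by
          apply div_le_div_of_nonneg_left (norm_nonneg _) (by norm_num) hD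
      _ = 2 * ‖Fterm m s τ z1 z2 j‖ := by ring
      _ ≤ g j := by
          have : (0:ℝ) ≤ (2/‖w‖) * ‖Fterm m s τ z1 z2 j * q ^ (-j)‖ := by positivity
          simp only [hg]; linarith

/-- The one-step difference identity. -/
lemma step_lemma (m s : ℝ) (hm : 0 < m) (τ z1 z2 : ℂ) (hτ : 0 < τ.im)
    (hden : ∀ j : ℤ, Complex.exp (2*(π:ℂ)*Complex.I*z1) * Complex.exp (2*(π:ℂ)*Complex.I*τ) ^ j ≠ 1) :
    Phi1 m s τ z1 z2 0 - Phi1 m (s+1) τ z1 z2 0 = ∑' j : ℤ, Fterm m s τ z1 z2 j := by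
  have h0 : ∀ s' : ℝ, Phi1 m s' τ z1 z2 0 = ∑' j : ℤ, Fterm m s' τ z1 z2 j /
      (1 - Complex.exp (2*(π:ℂ)*Complex.I*z1) * Complex.exp (2*(π:ℂ)*Complex.I*τ) ^ j) := by
    intro s'
    rw [Phi1]
    simp [Fterm]
  rw [h0, h0, ← Summable.tsum_sub (summable_phi m s hm τ z1 z2 hτ hden)
    (summable_phi m (s+1) hm τ z1 z2 hτ hden)]
  apply tsum_congr
  intro j
  have hD : (1 - Complex.exp (2*(π:ℂ)*Complex.I*z1) * Complex.exp (2*(π:ℂ)*Complex.I*τ) ^ j) ≠ 0 :=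
    sub_ne_zero.mpr (Ne.symm (hden j))
  have hF : Fterm m (s+1) τ z1 z2 j = Fterm m s τ z1 z2 j *
      (Complex.exp (2*(π:ℂ)*Complex.I*z1) * Complex.exp (2*(π:ℂ)*Complex.I*τ) ^ j) := by
    rw [Fterm, Fterm, ← Complex.exp_int_mul ((2*(π:ℂ)*Complex.I*τ)) j]
    rw [← Complex.exp_add, ← Complex.exp_add, ← Complex.exp_add, ← Complex.exp_add]
    congr 1
    push_cast
    ring
  rw [hF, div_sub_div_same]
  field_simp
/-- Rewriting the theta sum. -/
lemma theta_lemma (m s : ℝ) (hm : 0 < m) (τ z1 z2 : ℂ) :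
    ∑' j : ℤ, Fterm m s τ z1 z2 j =
      Complex.exp ((π:ℂ)*Complex.I*(s:ℂ)*(z1-z2)) *
        Complex.exp (2*(π:ℂ)*Complex.I*τ*((-(s^2)/(4*m) : ℝ) : ℂ)) *
        jacobiThetaKM s m τ (z1+z2) := by
  rw [jacobiThetaKM, ← tsum_mul_left]
  apply tsum_congr
  intro j
  rw [Fterm, ← Complex.exp_add, mul_assoc, ← Complex.exp_add, ← Complex.exp_add, ← Complex.exp_add]
  congr 1
  have hm' : (m:ℂ) ≠ 0 := by exact_mod_cast hm.ne'
  push_cast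
  field_simp
  ring

theorem stmt0 (m s : ℝ) (hm : ∃ n : ℕ, 0 < n ∧ m = (n : ℝ) / 2)
    (hs : ∃ k : ℤ, s = (k : ℝ) / 2) (a : ℕ) (ha : 0 < a)
    (τ z1 z2 : ℂ) (hτ : 0 < τ.im)
    (hden : ∀ j : ℤ, Complex.exp (2*(π:ℂ)*Complex.I*z1) * Complex.exp (2*(π:ℂ)*Complex.I*τ) ^ j ≠ 1) :
    Phi1 m s τ z1 z2 0 - Phi1 m (s + a) τ z1 z2 0 =
      ∑ k ∈ Finset.range a,
        Complex.exp ((π:ℂ)*Complex.I*((s:ℂ)+(k:ℂ))*(z1-z2)) *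
          Complex.exp (2*(π:ℂ)*Complex.I*τ*((-((s+(k:ℝ))^2)/(4*m) : ℝ) : ℂ)) *
          jacobiThetaKM (s + k) m τ (z1+z2) := by
  obtain ⟨n, hn, rfl⟩ := hm
  have hm0 : (0:ℝ) < (n:ℝ)/2 := by positivity
  clear ha hs
  induction a with
  | zero => simp
  | succ a ih =>
    rw [Finset.sum_range_succ, ← ih]
    have key : Phi1 ((n:ℝ)/2) (s + a) τ z1 z2 0 - Phi1 ((n:ℝ)/2) (s + (a+1:ℕ)) τ z1 z2 0 =
        Complex.exp ((π:ℂ)*Complex.I*((s:ℂ)+(a:ℂ))*(z1-z2)) *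
          Complex.exp (2*(π:ℂ)*Complex.I*τ*((-((s+(a:ℝ))^2)/(4*((n:ℝ)/2)) : ℝ) : ℂ)) *
          jacobiThetaKM (s + a) ((n:ℝ)/2) τ (z1+z2) := by
      have key2 := step_lemma ((n:ℝ)/2) (s + a) hm0 τ z1 z2 hτ hden
      rw [theta_lemma ((n:ℝ)/2) (s + a) hm0 τ z1 z2] at key2
      rw [show ((s + (a+1:ℕ) : ℝ)) = (s + a) + 1 by push_cast; ring]
      rw [key2]
      push_cast
      ring_nf
    linear_combination key

end
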